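/- Let C > 0 and let μ be a Borel probability measure on Ω × Θ_C whose pushforward under each τ̃_x, x ∈ ℝ^d, equals μ. Then: (i) for μ-almost every (ω, θ), the limit ρ_{(ω,θ)}(q) := lim_{t→+∞} θ(tq)/t exists for every q ∈ ℚ^d; (ii) for every x ∈ ℝ^d and q ∈ ℚ^d, for μ-almost every (ω, θ), lim_{t→+∞} (θ(x + tq) − θ(x))/t exists and equals lim_{t→+∞} θ(tq)/t, i.e. ρ is invariant under τ̃_x. -/

import Mathlib

open MeasureTheory Filter Topology
open scoped ENNReal

noncomputable section

/-- Euclidean space `ℝ^d`. -/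
abbrev EucSp (d : ℕ) := EuclideanSpace ℝ (Fin d)

/-- Vectors of `ℝ^d` with rational coordinates. -/
def IsRatVec {d : ℕ} (q : EucSp d) : Prop := ∀ i, ∃ a : ℚ, q i = (a : ℝ)

/-- `Θ_C`: functions `θ : ℝ^d → ℝ` with `θ 0 = 0` that are Lipschitz with constant `C`. -/
def Theta (d : ℕ) (C : ℝ) : Type :=
  {θ : EucSp d → ℝ // θ 0 = 0 ∧ ∀ x y, |θ x - θ y| ≤ C * ‖x - y‖}

/-- The distance `d(θ₁, θ₂) = sup_x |θ₁ x - θ₂ x| / (1 + |x|²)`. -/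
noncomputable def thetaDist {d : ℕ} {C : ℝ} (θ₁ θ₂ : Theta d C) : ℝ :=
  ⨆ x : EucSp d, |θ₁.1 x - θ₂.1 x| / (1 + ‖x‖ ^ 2)

theorem thetaDist_term_le {d : ℕ} {C : ℝ} (θ₁ θ₂ : Theta d C) (x : EucSp d) :
    |θ₁.1 x - θ₂.1 x| / (1 + ‖x‖ ^ 2) ≤ |C| := by
  have hx : (0:ℝ) < 1 + ‖x‖ ^ 2 := by positivity
  have a := θ₁.2.2 x 0
  have b := θ₂.2.2 x 0
  rw [θ₁.2.1] at a
  rw [θ₂.2.1] at b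
  simp only [sub_zero] at a b
  have h1 : |θ₁.1 x - θ₂.1 x| ≤ |θ₁.1 x| + |θ₂.1 x| := abs_sub _ _
  rw [div_le_iff₀ hx]
  nlinarith [abs_nonneg C, norm_nonneg x, sq_nonneg (‖x‖ - 1), le_abs_self C,
    mul_nonneg (abs_nonneg C) (sq_nonneg (‖x‖ - 1)),
    mul_nonneg (sub_nonneg.mpr (le_abs_self C)) (norm_nonneg x)]

theorem thetaDist_bddAbove {d : ℕ} {C : ℝ} (θ₁ θ₂ : Theta d C) :
    BddAbove (Set.range fun x : EucSp d => |θ₁.1 x - θ₂.1 x| / (1 + ‖x‖ ^ 2)) := by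
  refine ⟨|C|, ?_⟩
  rintro y ⟨x, rfl⟩
  exact thetaDist_term_le θ₁ θ₂ x

/-- `(Θ_C, thetaDist)` is a metric space. -/
noncomputable instance {d : ℕ} {C : ℝ} : MetricSpace (Theta d C) where
  dist := thetaDist
  dist_self θ := by simp [thetaDist]
  dist_comm θ₁ θ₂ := by
    unfold thetaDist
    exact iSup_congr fun x => by rw [abs_sub_comm]
  dist_triangle θ₁ θ₂ θ₃ := by
    refine ciSup_le fun x => ?_
    have h : |θ₁.1 x - θ₃.1 x| / (1 + ‖x‖ ^ 2) ≤
        |θ₁.1 x - θ₂.1 x| / (1 + ‖x‖ ^ 2) + |θ₂.1 x - θ₃.1 x| / (1 + ‖x‖ ^ 2) := by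
      rw [← add_div]
      gcongr
      exact abs_sub_le _ _ _
    refine h.trans (add_le_add ?_ ?_)
    · exact le_ciSup (thetaDist_bddAbove θ₁ θ₂) x
    · exact le_ciSup (thetaDist_bddAbove θ₂ θ₃) x
  eq_of_dist_eq_zero {θ₁ θ₂} h := by
    have h' : thetaDist θ₁ θ₂ = 0 := h
    apply Subtype.ext
    funext x
    have hx : (0:ℝ) < 1 + ‖x‖ ^ 2 := by positivity
    have hle : |θ₁.1 x - θ₂.1 x| / (1 + ‖x‖ ^ 2) ≤ thetaDist θ₁ θ₂ :=
      le_ciSup (thetaDist_bddAbove θ₁ θ₂) x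
    rw [h'] at hle
    have h0 : 0 ≤ |θ₁.1 x - θ₂.1 x| / (1 + ‖x‖ ^ 2) := by positivity
    have heq : |θ₁.1 x - θ₂.1 x| / (1 + ‖x‖ ^ 2) = 0 := le_antisymm hle h0
    rcases div_eq_zero_iff.mp heq with hnum | hden
    · exact sub_eq_zero.mp (abs_eq_zero.mp hnum)
    · exact absurd hden hx.ne'

instance {d : ℕ} {C : ℝ} : MeasurableSpace (Theta d C) := borel _
instance {d : ℕ} {C : ℝ} : BorelSpace (Theta d C) := ⟨rfl⟩

/-- The shift `θ ↦ θ(· + x) − θ(x)` on `Θ_C`. -/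
def Theta.shift {d : ℕ} {C : ℝ} (x : EucSp d) (θ : Theta d C) : Theta d C :=
  ⟨fun y => θ.1 (y + x) - θ.1 x, by simp [θ.2.1], fun y z => by
    have h := θ.2.2 (y + x) (z + x)
    simpa using h⟩


section Stmt9Aux
set_option linter.unusedSectionVars false

set_option linter.unusedSectionVars false
variable {α : Type*} [MeasurableSpace α]

/-- running maximum of Birkhoff sums `0, S₁, …, S_N`. -/
def maxS (T : α → α) (f : α → ℝ) : ℕ → α → ℝ
  | 0 => fun _ => 0
  | (N+1) => fun x => max (maxS T f N x) (birkhoffSum T f (N+1) x)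

theorem maxS_nonneg (T : α → α) (f : α → ℝ) (N : ℕ) (x : α) : 0 ≤ maxS T f N x := by
  induction N with
  | zero => exact le_refl 0
  | succ N ih => exact le_trans ih (le_max_left _ _)

theorem maxS_mono (T : α → α) (f : α → ℝ) {N N' : ℕ} (h : N ≤ N') (x : α) :
    maxS T f N x ≤ maxS T f N' x := by
  induction N' with
  | zero => simp_all [Nat.le_zero.mp h, maxS]
  | succ N' ih =>
    rcases Nat.lt_succ_iff_lt_or_eq.mp (Nat.lt_succ_of_le h) with h' | rfl
    · exact le_trans (ih (Nat.lt_succ_iff.mp (Nat.succ_le_of_lt h'))) (le_max_left _ _)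
    · exact le_refl _

theorem birkhoffSum_le_maxS (T : α → α) (f : α → ℝ) {k N : ℕ} (h : k ≤ N) (x : α) :
    birkhoffSum T f k x ≤ maxS T f N x := by
  induction N with
  | zero =>
    have hk : k = 0 := Nat.le_zero.mp h
    subst hk
    simp [maxS, birkhoffSum_zero]
  | succ N ih =>
    rcases h.lt_or_eq with h' | rfl
    · exact (ih (Nat.lt_succ_iff.mp h')).trans (le_max_left _ _)
    · exact le_max_right _ _

theorem maxS_key (T : α → α) (f : α → ℝ) (N : ℕ) (x : α) (h : 0 < maxS T f N x) :
    maxS T f N x ≤ f x + maxS T f N (T x) := by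
  induction N with
  | zero => exact absurd h (by simp [maxS])
  | succ N ih =>
    have hS : birkhoffSum T f (N+1) x ≤ f x + maxS T f (N+1) (T x) := by
      rw [birkhoffSum_succ']
      exact add_le_add le_rfl (birkhoffSum_le_maxS T f (Nat.le_succ N) (T x))
    rcases le_or_gt (maxS T f N x) (birkhoffSum T f (N+1) x) with h' | h'
    · calc maxS T f (N+1) x = birkhoffSum T f (N+1) x := max_eq_right h'
        _ ≤ _ := hS
    · have : maxS T f (N+1) x = maxS T f N x := max_eq_left h'.le
      rw [this] at h ⊢
      exact le_trans (ih h) (add_le_add le_rfl (maxS_mono T f (Nat.le_succ N) (T x)))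

theorem measurable_birkhoffSum {T : α → α} {f : α → ℝ} (hT : Measurable T) (hf : Measurable f)
    (n : ℕ) : Measurable (birkhoffSum T f n) :=
  Finset.measurable_sum _ fun k _ => hf.comp (hT.iterate k)

theorem measurable_maxS {T : α → α} {f : α → ℝ} (hT : Measurable T) (hf : Measurable f)
    (N : ℕ) : Measurable (maxS T f N) := by
  induction N with
  | zero => exact measurable_const
  | succ N ih => exact ih.max (measurable_birkhoffSum hT hf (N+1))

theorem abs_birkhoffSum_le {T : α → α} {f : α → ℝ} {M : ℝ} (hM : ∀ x, |f x| ≤ M)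
    (n : ℕ) (x : α) : |birkhoffSum T f n x| ≤ n * M := by
  calc |birkhoffSum T f n x| ≤ ∑ k ∈ Finset.range n, |f (T^[k] x)| :=
        Finset.abs_sum_le_sum_abs _ _
    _ ≤ ∑ _k ∈ Finset.range n, M := Finset.sum_le_sum fun k _ => hM _
    _ = n * M := by simp [mul_comm]

theorem abs_maxS_le {T : α → α} {f : α → ℝ} {M : ℝ} (hM : ∀ x, |f x| ≤ M) (hM0 : 0 ≤ M)
    (N : ℕ) (x : α) : |maxS T f N x| ≤ N * M := by
  rw [abs_le]
  constructor
  · calc -((N:ℝ) * M) ≤ 0 := neg_nonpos.mpr (by positivity)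
      _ ≤ _ := maxS_nonneg T f N x
  · induction N with
    | zero => simp [maxS]
    | succ N ih =>
      refine max_le (ih.trans ?_) ?_
      · have : (N:ℝ) ≤ (N:ℝ) + 1 := by linarith
        push_cast
        nlinarith
      · have := (abs_le.mp (abs_birkhoffSum_le (T := T) hM (N+1) x)).2
        push_cast at this ⊢
        linarith


theorem integrable_of_bound {μ : Measure α} [IsFiniteMeasure μ] {f : α → ℝ}
    (hf : Measurable f) (M : ℝ) (hM : ∀ x, |f x| ≤ M) : Integrable f μ :=
  ⟨hf.aestronglyMeasurable, HasFiniteIntegral.of_bounded (C := M)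
    (ae_of_all _ fun x => by simpa [Real.norm_eq_abs] using hM x)⟩

/-- Garsia's maximal ergodic lemma. -/
theorem garsia {μ : Measure α} [IsFiniteMeasure μ] {T : α → α} {f : α → ℝ}
    (hT : MeasurePreserving T μ μ) (hf : Measurable f) (M : ℝ) (hM : ∀ x, |f x| ≤ M)
    (hM0 : 0 ≤ M) (N : ℕ) :
    0 ≤ ∫ x in {x | 0 < maxS T f N x}, f x ∂μ := by
  set E : Set α := {x | 0 < maxS T f N x} with hE
  have hmE : Measurable (maxS T f N) := measurable_maxS hT.measurable hf N
  have hEm : MeasurableSet E := measurableSet_lt measurable_const hmE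
  have int_f : Integrable f μ := integrable_of_bound hf M hM
  have int_m : Integrable (maxS T f N) μ :=
    integrable_of_bound hmE (N * M) (abs_maxS_le hM hM0 N)
  have int_mT : Integrable (fun x => maxS T f N (T x)) μ :=
    integrable_of_bound (hmE.comp hT.measurable) (N * M) fun x => abs_maxS_le hM hM0 N (T x)
  have h1 : ∀ x ∈ E, maxS T f N x - maxS T f N (T x) ≤ f x := fun x hx => by
    have := maxS_key T f N x hx
    linarith
  have h2 : ∫ x in E, (maxS T f N x - maxS T f N (T x)) ∂μ ≤ ∫ x in E, f x ∂μ :=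
    setIntegral_mono_on (int_m.integrableOn.sub int_mT.integrableOn) int_f.integrableOn hEm h1
  have h3 : ∫ x in E, (maxS T f N x - maxS T f N (T x)) ∂μ
      = (∫ x in E, maxS T f N x ∂μ) - ∫ x in E, maxS T f N (T x) ∂μ :=
    integral_sub int_m.integrableOn int_mT.integrableOn
  have h4 : ∫ x in E, maxS T f N x ∂μ = ∫ x, maxS T f N x ∂μ :=
    setIntegral_eq_integral_of_forall_compl_eq_zero fun x hx =>
      le_antisymm (not_lt.mp hx) (maxS_nonneg T f N x)
  have h5 : ∫ x in E, maxS T f N (T x) ∂μ ≤ ∫ x, maxS T f N (T x) ∂μ :=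
    setIntegral_le_integral int_mT (ae_of_all _ fun x => maxS_nonneg T f N (T x))
  have h6 : ∫ x, maxS T f N (T x) ∂μ = ∫ x, maxS T f N x ∂μ := by
    calc ∫ x, maxS T f N (T x) ∂μ = ∫ y, maxS T f N y ∂(μ.map T) :=
          (integral_map hT.measurable.aemeasurable hmE.aestronglyMeasurable).symm
      _ = _ := by rw [hT.map_eq]
  linarith

theorem bdd_le {u : ℕ → ℝ} {B : ℝ} (hu : ∀ n, |u n| ≤ B) :
    IsBoundedUnder (· ≤ ·) atTop u :=
  isBoundedUnder_of ⟨B, fun n => (abs_le.mp (hu n)).2⟩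

theorem bdd_ge {u : ℕ → ℝ} {B : ℝ} (hu : ∀ n, |u n| ≤ B) :
    IsBoundedUnder (· ≥ ·) atTop u :=
  isBoundedUnder_of ⟨-B, fun n => (abs_le.mp (hu n)).1⟩

theorem limsup_le_of_sub_tendsto {u v : ℕ → ℝ} {B : ℝ} (hu : ∀ n, |u n| ≤ B)
    (hv : ∀ n, |v n| ≤ B) (h : Tendsto (fun n => u n - v n) atTop (𝓝 0)) :
    limsup u atTop ≤ limsup v atTop := by
  refine le_of_forall_pos_le_add fun ε hε => ?_
  by_contra hlt
  push_neg at hlt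
  have hev : ∀ᶠ n in atTop, u n ≤ v n + ε / 2 := by
    filter_upwards [NormedAddCommGroup.tendsto_nhds_zero.mp h (ε / 2) (by linarith)] with n hn
    have := (abs_le.mp (le_of_lt (by simpa [Real.norm_eq_abs] using hn))).2
    linarith
  have hfreq : ∃ᶠ n in atTop, limsup v atTop + ε < u n :=
    frequently_lt_of_lt_limsup ((bdd_ge hu).isCoboundedUnder_le) hlt
  have : ∃ᶠ n in atTop, limsup v atTop + ε / 2 ≤ v n := by
    refine (hfreq.and_eventually hev).mono fun n hn => ?_
    linarith [hn.1, hn.2]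
  have := le_limsup_of_frequently_le this (bdd_le hv)
  linarith

theorem limsup_eq_of_sub_tendsto {u v : ℕ → ℝ} {B : ℝ} (hu : ∀ n, |u n| ≤ B)
    (hv : ∀ n, |v n| ≤ B) (h : Tendsto (fun n => u n - v n) atTop (𝓝 0)) :
    limsup u atTop = limsup v atTop := by
  refine le_antisymm (limsup_le_of_sub_tendsto hu hv h) (limsup_le_of_sub_tendsto hv hu ?_)
  have := h.neg
  simpa using this

theorem liminf_eq_of_sub_tendsto {u v : ℕ → ℝ} {B : ℝ} (hu : ∀ n, |u n| ≤ B)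
    (hv : ∀ n, |v n| ≤ B) (h : Tendsto (fun n => u n - v n) atTop (𝓝 0)) :
    liminf u atTop = liminf v atTop := by
  have main : ∀ {u v : ℕ → ℝ}, (∀ n, |u n| ≤ B) → (∀ n, |v n| ≤ B) →
      Tendsto (fun n => u n - v n) atTop (𝓝 0) → liminf v atTop ≤ liminf u atTop := by
    intro u v hu hv h
    refine le_of_forall_pos_le_add fun ε hε => ?_
    by_contra hlt
    push_neg at hlt
    have hev : ∀ᶠ n in atTop, v n ≤ u n + ε / 2 := by
      filter_upwards [NormedAddCommGroup.tendsto_nhds_zero.mp h (ε / 2) (by linarith)] with n hn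
      have := (abs_le.mp (le_of_lt (by simpa [Real.norm_eq_abs] using hn))).1
      linarith
    have hev2 : ∀ᶠ n in atTop, liminf u atTop + ε < v n :=
      eventually_lt_of_lt_liminf hlt (bdd_ge hv)
    have : ∀ᶠ n in atTop, liminf u atTop + ε / 2 ≤ u n := by
      filter_upwards [hev, hev2] with n h1 h2
      linarith
    have := le_liminf_of_le ((bdd_le hu).isCoboundedUnder_ge) this
    linarith
  refine le_antisymm (main hv hu ?_) (main hu hv h)
  have := h.neg
  simpa using this

/-- Key estimate: on a `T`-invariant set where the Birkhoff averages frequently exceed `b`,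
the integral of `f` is at least `b` times the measure. -/
theorem cross_estimate {μ : Measure α} [IsFiniteMeasure μ] {T : α → α} {f : α → ℝ}
    (hT : MeasurePreserving T μ μ) (hf : Measurable f) (M : ℝ) (hM : ∀ x, |f x| ≤ M)
    (hM0 : 0 ≤ M) {E : Set α} (hEm : MeasurableSet E) (hinv : T ⁻¹' E = E) (b : ℝ)
    (hfreq : ∀ x ∈ E, ∃ n, 1 ≤ n ∧ b * n < birkhoffSum T f n x) :
    b * (μ E).toReal ≤ ∫ x in E, f x ∂μ := by
  set g : α → ℝ := fun x => f x - b with hg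
  have hgm : Measurable g := hf.sub measurable_const
  have hgbd : ∀ x, |g x| ≤ M + |b| := fun x => by
    calc |g x| ≤ |f x| + |b| := abs_sub _ _
      _ ≤ M + |b| := by linarith [hM x]
  have hMb0 : (0:ℝ) ≤ M + |b| := by positivity
  set ν : Measure α := μ.restrict E with hν
  have hTν : MeasurePreserving T ν ν := by
    have := hT.restrict_preimage hEm
    rwa [hinv] at this
  -- birkhoffSum of g
  have hSg : ∀ n x, birkhoffSum T g n x = birkhoffSum T f n x - n * b := by
    intro n x
    simp only [birkhoffSum, hg, Finset.sum_sub_distrib, Finset.sum_const, Finset.card_range,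
      nsmul_eq_mul]
  set U : Set α := ⋃ N, {x | 0 < maxS T g N x} with hU
  have hENm : ∀ N : ℕ, MeasurableSet {x | 0 < maxS T g N x} := fun N =>
    measurableSet_lt measurable_const (measurable_maxS hT.measurable hgm N)
  have hUm : MeasurableSet U := MeasurableSet.iUnion hENm
  have hmono : Monotone fun N : ℕ => {x | 0 < maxS T g N x} := fun N N' h x hx =>
    lt_of_lt_of_le hx (maxS_mono T g h x)
  have hsub : E ⊆ U := by
    intro x hx
    obtain ⟨n, hn1, hbn⟩ := hfreq x hx
    refine Set.mem_iUnion.mpr ⟨n, ?_⟩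
    have h1 : 0 < birkhoffSum T g n x := by
      rw [hSg]
      linarith [hbn]
    exact lt_of_lt_of_le h1 (birkhoffSum_le_maxS T g (le_refl n) x)
  have int_g : Integrable g ν := integrable_of_bound hgm (M + |b|) hgbd
  have hgar : ∀ N : ℕ, 0 ≤ ∫ x in {x | 0 < maxS T g N x}, g x ∂ν := fun N =>
    garsia hTν hgm (M + |b|) hgbd hMb0 N
  have htend : Tendsto (fun N : ℕ => ∫ x in {x | 0 < maxS T g N x}, g x ∂ν) atTop
      (𝓝 (∫ x in U, g x ∂ν)) :=
    tendsto_setIntegral_of_monotone hENm hmono int_g.integrableOn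
  have hint_U : 0 ≤ ∫ x in U, g x ∂ν := ge_of_tendsto' htend hgar
  have hνUc : ν Uᶜ = 0 := by
    rw [hν, Measure.restrict_apply hUm.compl]
    have : Uᶜ ∩ E = ∅ := by
      rw [Set.eq_empty_iff_forall_notMem]
      exact fun x hx => hx.1 (hsub hx.2)
    rw [this, measure_empty]
  have hintc : ∫ x in Uᶜ, g x ∂ν = 0 := by
    rw [Measure.restrict_eq_zero.mpr hνUc, integral_zero_measure]
  have hall : 0 ≤ ∫ x, g x ∂ν := by
    rw [← integral_add_compl hUm int_g, hintc, add_zero]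
    exact hint_U
  have hfin : ∫ x, g x ∂ν = (∫ x in E, f x ∂μ) - b * (μ E).toReal := by
    rw [hν]
    have int_fE : IntegrableOn f E μ := (integrable_of_bound hf M hM).integrableOn
    have : ∫ x in E, g x ∂μ = (∫ x in E, f x ∂μ) - ∫ x in E, (b:ℝ) ∂μ :=
      integral_sub int_fE (integrableOn_const (measure_lt_top μ E).ne)
    rw [this, setIntegral_const, smul_eq_mul, mul_comm]
    rfl
  linarith [hall, hfin]

theorem birkhoffSum_neg' (T : α → α) (f : α → ℝ) (n : ℕ) (x : α) :
    birkhoffSum T (fun y => -f y) n x = -birkhoffSum T f n x := by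
  simp [birkhoffSum]

/-- Pointwise (Birkhoff) ergodic theorem for bounded measurable functions:
the Birkhoff averages converge almost everywhere. -/
theorem birkhoff_bounded {μ : Measure α} [IsFiniteMeasure μ] {T : α → α} {f : α → ℝ}
    (hT : MeasurePreserving T μ μ) (hf : Measurable f) (M : ℝ) (hM : ∀ x, |f x| ≤ M)
    (hM0 : 0 ≤ M) :
    ∀ᵐ x ∂μ, ∃ L, Tendsto (fun n : ℕ => birkhoffSum T f n x / n) atTop (𝓝 L) := by
  set A : ℕ → α → ℝ := fun n x => birkhoffSum T f n x / n with hA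
  have hAbd : ∀ x n, |A n x| ≤ M := by
    intro x n
    cases n with
    | zero => simpa [hA, birkhoffSum_zero] using hM0
    | succ n =>
      have hpos : (0:ℝ) < (n+1 : ℕ) := by positivity
      rw [hA, abs_div, abs_of_pos hpos, div_le_iff₀ hpos]
      calc |birkhoffSum T f (n+1) x| ≤ (n+1 : ℕ) * M := abs_birkhoffSum_le hM (n+1) x
        _ = M * (n+1 : ℕ) := mul_comm _ _
  have hA_meas : ∀ n, Measurable (A n) := fun n =>
    (measurable_birkhoffSum hT.measurable hf n).div_const _
  have hdiff : ∀ x, Tendsto (fun n : ℕ => A n (T x) - A (n+1) x) atTop (𝓝 0) := by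
    intro x
    refine squeeze_zero_norm' (a := fun n : ℕ => 2 * M / n) ?_ (tendsto_const_div_atTop_nhds_zero_nat (2 * M))
    filter_upwards [eventually_ge_atTop 1] with n hn
    have hn0 : (0:ℝ) < n := by exact_mod_cast hn
    have hn1 : (0:ℝ) < (n:ℝ) + 1 := by linarith
    set S : ℝ := birkhoffSum T f (n+1) x with hS
    have hrec : birkhoffSum T f n (T x) = S - f x := by
      rw [hS, birkhoffSum_succ']
      ring
    have hAn : A n (T x) = (S - f x) / n := by rw [hA]; simp [hrec]
    have hAn1 : A (n+1) x = S / ((n:ℝ) + 1) := by simp only [hA, ← hS]; push_cast; ring_nf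
    have hid : (S - f x) / n - S / ((n:ℝ) + 1) = (S - ((n:ℝ) + 1) * f x) / (n * ((n:ℝ) + 1)) := by
      field_simp
      ring
    have hSbd : |S| ≤ ((n:ℝ) + 1) * M := by
      have := abs_birkhoffSum_le (T := T) hM (n+1) x
      rw [← hS] at this
      push_cast at this
      linarith
    have hnum : |S - ((n:ℝ) + 1) * f x| ≤ 2 * ((n:ℝ) + 1) * M := by
      calc |S - ((n:ℝ) + 1) * f x| ≤ |S| + |((n:ℝ) + 1) * f x| := abs_sub _ _
        _ ≤ ((n:ℝ) + 1) * M + ((n:ℝ) + 1) * M := by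
          refine add_le_add hSbd ?_
          rw [abs_mul, abs_of_pos hn1]
          exact mul_le_mul_of_nonneg_left (hM x) hn1.le
        _ = 2 * ((n:ℝ) + 1) * M := by ring
    rw [Real.norm_eq_abs, hAn, hAn1, hid, abs_div, abs_of_pos (by positivity : (0:ℝ) < n * ((n:ℝ)+1)),
      div_le_div_iff₀ (by positivity) hn0]
    nlinarith [hnum]
  set G : α → ℝ := fun x => limsup (fun n => A n x) atTop with hG
  set g : α → ℝ := fun x => liminf (fun n => A n x) atTop with hg
  have hGT : ∀ x, G (T x) = G x := by
    intro x
    have h1 : limsup (fun n => A n (T x)) atTop = limsup (fun n => A (n+1) x) atTop :=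
      limsup_eq_of_sub_tendsto (B := M) (hAbd (T x)) (fun n => hAbd x (n+1)) (hdiff x)
    calc G (T x) = limsup (fun n => A (n+1) x) atTop := h1
      _ = G x := limsup_nat_add (fun n => A n x) 1
  have hgT : ∀ x, g (T x) = g x := by
    intro x
    have h1 : liminf (fun n => A n (T x)) atTop = liminf (fun n => A (n+1) x) atTop :=
      liminf_eq_of_sub_tendsto (B := M) (hAbd (T x)) (fun n => hAbd x (n+1)) (hdiff x)
    calc g (T x) = liminf (fun n => A (n+1) x) atTop := h1
      _ = g x := liminf_nat_add (fun n => A n x) 1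
  have hGset : ∀ b : ℝ, MeasurableSet {x | b < G x} := by
    intro b
    have heq : {x | b < G x} = ⋃ (b' : ℚ), ⋃ (_ : b < (b':ℝ)),
        ⋂ (m : ℕ), ⋃ (n : ℕ), ⋃ (_ : m ≤ n), {x | (b':ℝ) < A n x} := by
      ext x
      simp only [Set.mem_iUnion, Set.mem_iInter, Set.mem_setOf_eq]
      constructor
      · intro hb
        obtain ⟨b', hb1, hb2⟩ := exists_rat_btwn hb
        refine ⟨b', hb1, fun m => ?_⟩
        have hfr : ∃ᶠ n in atTop, (b':ℝ) < A n x :=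
          frequently_lt_of_lt_limsup ((bdd_ge (hAbd x)).isCoboundedUnder_le) hb2
        obtain ⟨n, hn1, hn2⟩ := frequently_atTop.mp hfr m
        exact ⟨n, hn1, hn2⟩
      · rintro ⟨b', hb1, hfr⟩
        have : ∃ᶠ n in atTop, (b':ℝ) ≤ A n x :=
          frequently_atTop.mpr fun m => (hfr m).imp fun n hn => ⟨hn.1, hn.2.le⟩
        exact lt_of_lt_of_le hb1 (le_limsup_of_frequently_le this (bdd_le (hAbd x)))
    rw [heq]
    exact MeasurableSet.iUnion fun b' => MeasurableSet.iUnion fun _ =>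
      MeasurableSet.iInter fun m => MeasurableSet.iUnion fun n => MeasurableSet.iUnion fun _ =>
        measurableSet_lt measurable_const (hA_meas n)
  have hgset : ∀ a : ℝ, MeasurableSet {x | g x < a} := by
    intro a
    have heq : {x | g x < a} = ⋃ (a' : ℚ), ⋃ (_ : (a':ℝ) < a),
        ⋂ (m : ℕ), ⋃ (n : ℕ), ⋃ (_ : m ≤ n), {x | A n x < (a':ℝ)} := by
      ext x
      simp only [Set.mem_iUnion, Set.mem_iInter, Set.mem_setOf_eq]
      constructor
      · intro ha
        obtain ⟨a', ha1, ha2⟩ := exists_rat_btwn ha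
        refine ⟨a', ha2, fun m => ?_⟩
        have hfr : ∃ᶠ n in atTop, A n x < (a':ℝ) :=
          frequently_lt_of_liminf_lt ((bdd_le (hAbd x)).isCoboundedUnder_ge) ha1
        obtain ⟨n, hn1, hn2⟩ := frequently_atTop.mp hfr m
        exact ⟨n, hn1, hn2⟩
      · rintro ⟨a', ha1, hfr⟩
        have : ∃ᶠ n in atTop, A n x ≤ (a':ℝ) :=
          frequently_atTop.mpr fun m => (hfr m).imp fun n hn => ⟨hn.1, hn.2.le⟩
        exact lt_of_le_of_lt (liminf_le_of_frequently_le this (bdd_ge (hAbd x))) ha1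
    rw [heq]
    exact MeasurableSet.iUnion fun a' => MeasurableSet.iUnion fun _ =>
      MeasurableSet.iInter fun m => MeasurableSet.iUnion fun n => MeasurableSet.iUnion fun _ =>
        measurableSet_lt (hA_meas n) measurable_const
  have key : ∀ a b : ℝ, a < b → μ {x | g x < a ∧ b < G x} = 0 := by
    intro a b hab
    set E : Set α := {x | g x < a ∧ b < G x} with hE
    have hEm : MeasurableSet E := (hgset a).inter (hGset b)
    have hinvE : T ⁻¹' E = E := by
      ext x
      simp only [Set.mem_preimage, hE, Set.mem_setOf_eq, hGT x, hgT x]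
    have hfreq1 : ∀ x ∈ E, ∃ n, 1 ≤ n ∧ b * n < birkhoffSum T f n x := by
      intro x hx
      have hfr : ∃ᶠ n in atTop, b < A n x :=
        frequently_lt_of_lt_limsup ((bdd_ge (hAbd x)).isCoboundedUnder_le) hx.2
      obtain ⟨n, hn1, hbn⟩ := frequently_atTop.mp hfr 1
      refine ⟨n, hn1, ?_⟩
      have hn0 : (0:ℝ) < n := by exact_mod_cast hn1
      have := (lt_div_iff₀ hn0).mp hbn
      linarith
    have hfreq2 : ∀ x ∈ E, ∃ n, 1 ≤ n ∧ (-a) * n < birkhoffSum T (fun y => -f y) n x := by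
      intro x hx
      have hfr : ∃ᶠ n in atTop, A n x < a :=
        frequently_lt_of_liminf_lt ((bdd_le (hAbd x)).isCoboundedUnder_ge) hx.1
      obtain ⟨n, hn1, hbn⟩ := frequently_atTop.mp hfr 1
      refine ⟨n, hn1, ?_⟩
      have hn0 : (0:ℝ) < n := by exact_mod_cast hn1
      have := (div_lt_iff₀ hn0).mp hbn
      rw [birkhoffSum_neg']
      linarith
    have cross1 : b * (μ E).toReal ≤ ∫ x in E, f x ∂μ :=
      cross_estimate hT hf M hM hM0 hEm hinvE b hfreq1
    have cross2 : (-a) * (μ E).toReal ≤ ∫ x in E, -f x ∂μ :=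
      cross_estimate hT hf.neg M (fun x => by simpa using hM x) hM0 hEm hinvE (-a) hfreq2
    rw [integral_neg] at cross2
    have hm0 : (μ E).toReal = 0 := by
      have h1 : (0:ℝ) ≤ (μ E).toReal := ENNReal.toReal_nonneg
      nlinarith
    exact ((ENNReal.toReal_eq_zero_iff _).mp hm0).resolve_right (measure_ne_top μ E)
  have hae : ∀ᵐ x ∂μ, ∀ a b : ℚ, (a:ℝ) < (b:ℝ) → ¬(g x < (a:ℝ) ∧ (b:ℝ) < G x) := by
    rw [ae_all_iff]
    intro a
    rw [ae_all_iff]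
    intro b
    by_cases hab : (a:ℝ) < (b:ℝ)
    · filter_upwards [measure_eq_zero_iff_ae_notMem.mp (key a b hab)] with x hx
      exact fun _ => hx
    · filter_upwards with x
      exact fun h => absurd h hab
  filter_upwards [hae] with x hx
  have hll : g x ≤ G x := liminf_le_limsup (bdd_le (hAbd x)) (bdd_ge (hAbd x))
  have hGg : G x ≤ g x := by
    by_contra h
    push_neg at h
    obtain ⟨a, ha1, ha2⟩ := exists_rat_btwn h
    obtain ⟨b, hb1, hb2⟩ := exists_rat_btwn ha2
    exact hx a b (by exact_mod_cast hb1) ⟨ha1, hb2⟩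
  exact ⟨G x, tendsto_of_liminf_eq_limsup (le_antisymm hll hGg) rfl
    (bdd_le (hAbd x)) (bdd_ge (hAbd x))⟩




/-- nat-limit to real-limit for Lipschitz paths -/
theorem tendsto_real_of_nat {K L : ℝ} (hK : 0 ≤ K) (φ : ℝ → ℝ) (hφ0 : φ 0 = 0)
    (hlip : ∀ s t : ℝ, |φ s - φ t| ≤ K * |s - t|)
    (h : Tendsto (fun n : ℕ => φ n / n) atTop (𝓝 L)) :
    Tendsto (fun t : ℝ => φ t / t) atTop (𝓝 L) := by
  have h1 : Tendsto (fun t : ℝ => φ (⌊t⌋₊ : ℕ) / ((⌊t⌋₊ : ℕ) : ℝ)) atTop (𝓝 L) :=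
    h.comp tendsto_nat_floor_atTop
  have h2 : Tendsto (fun t : ℝ => φ t / t - φ (⌊t⌋₊ : ℕ) / ((⌊t⌋₊ : ℕ) : ℝ)) atTop (𝓝 0) := by
    refine squeeze_zero_norm' (a := fun t : ℝ => 2 * K / t) ?_
      (Tendsto.div_atTop tendsto_const_nhds tendsto_id)
    filter_upwards [eventually_ge_atTop (1:ℝ)] with t ht
    set n : ℕ := ⌊t⌋₊ with hn
    have ht0 : (0:ℝ) < t := by linarith
    have hn1 : 1 ≤ n := Nat.le_floor (by exact_mod_cast ht)
    have hnr : (1:ℝ) ≤ (n:ℝ) := by exact_mod_cast hn1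
    have hn0 : (0:ℝ) < (n:ℝ) := by linarith
    have hnt : (n:ℝ) ≤ t := Nat.floor_le ht0.le
    have htn : t < (n:ℝ) + 1 := Nat.lt_floor_add_one t
    have key : φ t / t - φ n / n = (φ t - φ n) / t + φ n * (1 / t - 1 / n) := by
      field_simp
      ring
    have e1 : |φ t - φ n| ≤ K := by
      calc |φ t - φ n| ≤ K * |t - n| := hlip t n
        _ ≤ K * 1 := by
          refine mul_le_mul_of_nonneg_left ?_ hK
          rw [abs_of_nonneg (by linarith)]
          linarith
        _ = K := mul_one K
    have e2 : |φ n| ≤ K * n := by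
      have := hlip n 0
      rw [hφ0, sub_zero, sub_zero, abs_of_nonneg hn0.le] at this
      exact this
    have e3 : |1 / t - 1 / (n:ℝ)| = (t - n) / (t * n) := by
      rw [abs_of_nonpos (by
        have : 1 / t ≤ 1 / (n:ℝ) := one_div_le_one_div_of_le hn0 hnt
        linarith)]
      rw [neg_sub, div_sub_div _ _ hn0.ne' ht0.ne', div_eq_div_iff (by positivity) (by positivity)]
      ring
    rw [Real.norm_eq_abs, key]
    calc |(φ t - φ n) / t + φ n * (1 / t - 1 / n)|
        ≤ |(φ t - φ n) / t| + |φ n * (1 / t - 1 / n)| := abs_add_le _ _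
      _ = |φ t - φ n| / t + |φ n| * ((t - n) / (t * n)) := by
          rw [abs_div, abs_of_pos ht0, abs_mul, e3]
      _ ≤ K / t + (K * n) * ((t - n) / (t * n)) := by
          have h4 : (0:ℝ) ≤ (t - n) / (t * n) := div_nonneg (by linarith) (by positivity)
          gcongr
      _ = K / t + K * ((t - n) / t) := by
          congr 1
          field_simp
      _ ≤ K / t + K * (1 / t) := by
          have h5 : (t - n) / t ≤ 1 / t := by gcongr; linarith
          exact add_le_add le_rfl (mul_le_mul_of_nonneg_left h5 hK)
      _ = 2 * K / t := by ring
  have := h1.add h2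
  rw [add_zero] at this
  refine this.congr fun t => ?_
  ring


end Stmt9Aux

section ThetaAux
variable {d : ℕ} {C : ℝ}

theorem theta_eval_le_dist (θ₁ θ₂ : Theta d C) (z : EucSp d) :
    |θ₁.1 z - θ₂.1 z| ≤ (1 + ‖z‖ ^ 2) * dist θ₁ θ₂ := by
  have h : |θ₁.1 z - θ₂.1 z| / (1 + ‖z‖ ^ 2) ≤ thetaDist θ₁ θ₂ :=
    le_ciSup (thetaDist_bddAbove θ₁ θ₂) z
  have hz : (0:ℝ) < 1 + ‖z‖ ^ 2 := by positivity
  have := mul_le_mul_of_nonneg_left h hz.le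
  rw [mul_div_cancel₀ _ hz.ne'] at this
  exact this

theorem theta_continuous_eval (z : EucSp d) : Continuous fun θ : Theta d C => θ.1 z := by
  refine (LipschitzWith.of_dist_le_mul (K := Real.toNNReal (1 + ‖z‖ ^ 2)) ?_).continuous
  intro θ₁ θ₂
  rw [Real.dist_eq, Real.coe_toNNReal _ (by positivity)]
  exact theta_eval_le_dist θ₁ θ₂ z

theorem theta_continuous_shift (x : EucSp d) :
    Continuous (Theta.shift (C := C) x) := by
  refine (LipschitzWith.of_dist_le_mul (K := Real.toNNReal (3 * (1 + ‖x‖ ^ 2))) ?_).continuous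
  intro θ₁ θ₂
  rw [Real.coe_toNNReal _ (by positivity)]
  show thetaDist _ _ ≤ _
  refine ciSup_le fun y => ?_
  have hy : (0:ℝ) < 1 + ‖y‖ ^ 2 := by positivity
  rw [div_le_iff₀ hy]
  have hD : (0:ℝ) ≤ dist θ₁ θ₂ := dist_nonneg
  have h1 : |θ₁.1 (y + x) - θ₂.1 (y + x)| ≤ (1 + ‖y + x‖ ^ 2) * dist θ₁ θ₂ :=
    theta_eval_le_dist θ₁ θ₂ (y + x)
  have h2 : |θ₁.1 x - θ₂.1 x| ≤ (1 + ‖x‖ ^ 2) * dist θ₁ θ₂ := theta_eval_le_dist θ₁ θ₂ x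
  have h3 : ‖y + x‖ ^ 2 ≤ 2 * ‖y‖ ^ 2 + 2 * ‖x‖ ^ 2 := by
    have := norm_add_le y x
    nlinarith [norm_nonneg y, norm_nonneg x, norm_nonneg (y + x), sq_nonneg (‖y‖ - ‖x‖)]
  have h4 : |(Theta.shift x θ₁).1 y - (Theta.shift x θ₂).1 y|
      ≤ |θ₁.1 (y + x) - θ₂.1 (y + x)| + |θ₁.1 x - θ₂.1 x| := by
    show |(θ₁.1 (y + x) - θ₁.1 x) - (θ₂.1 (y + x) - θ₂.1 x)| ≤ _
    have : (θ₁.1 (y + x) - θ₁.1 x) - (θ₂.1 (y + x) - θ₂.1 x)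
        = (θ₁.1 (y + x) - θ₂.1 (y + x)) - (θ₁.1 x - θ₂.1 x) := by ring
    rw [this]
    exact abs_sub _ _
  calc |(Theta.shift x θ₁).1 y - (Theta.shift x θ₂).1 y|
      ≤ (1 + ‖y + x‖ ^ 2) * dist θ₁ θ₂ + (1 + ‖x‖ ^ 2) * dist θ₁ θ₂ :=
        h4.trans (add_le_add h1 h2)
    _ ≤ 3 * (1 + ‖x‖ ^ 2) * dist θ₁ θ₂ * (1 + ‖y‖ ^ 2) := by
        nlinarith [sq_nonneg ‖y‖, sq_nonneg ‖x‖, mul_nonneg (sq_nonneg ‖y‖) (sq_nonneg ‖x‖),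
          mul_nonneg (mul_nonneg (sq_nonneg ‖y‖) (sq_nonneg ‖x‖)) hD,
          mul_nonneg (sq_nonneg ‖y‖) hD, mul_nonneg (sq_nonneg ‖x‖) hD]

theorem theta_shift_zero (θ : Theta d C) : Theta.shift 0 θ = θ := by
  apply Subtype.ext
  funext y
  show θ.1 (y + 0) - θ.1 0 = θ.1 y
  rw [θ.2.1, add_zero, sub_zero]

theorem theta_shift_shift (x q : EucSp d) (θ : Theta d C) :
    Theta.shift q (Theta.shift x θ) = Theta.shift (x + q) θ := by
  apply Subtype.ext
  funext y
  show (θ.1 (y + q + x) - θ.1 x) - (θ.1 (q + x) - θ.1 x) = θ.1 (y + (x + q)) - θ.1 (x + q)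
  have h1 : y + q + x = y + (x + q) := by abel
  have h2 : q + x = x + q := by abel
  rw [h1, h2]
  ring

end ThetaAux
/-- For a `τ̃`-invariant measure `μ` on `Ω × Θ_C`: (i) `μ`-a.s. the limit
`ρ(q) = lim_{t→∞} θ(tq)/t` exists for all rational directions `q`; (ii) this limit is
invariant under the shifts `τ̃_x`. -/
theorem stmt9 {d : ℕ} {Ω : Type*} [TopologicalSpace Ω] [PolishSpace Ω]
    [MeasurableSpace Ω] [BorelSpace Ω]
    (ℙ : Measure Ω) [IsProbabilityMeasure ℙ]
    (τ : EucSp d → Ω → Ω)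
    (hτgrp : ∀ x y ω, τ (x + y) ω = τ x (τ y ω))
    (hτzero : ∀ ω, τ 0 ω = ω)
    (hτcont : ∀ x, Continuous (τ x))
    (hτmp : ∀ x, MeasurePreserving (τ x) ℙ ℙ)
    (hτmeas : Measurable fun p : EucSp d × Ω => τ p.1 p.2)
    (C : ℝ) (hC : 0 < C)
    (μ : Measure (Ω × Theta d C)) [IsProbabilityMeasure μ]
    (hinv : ∀ x : EucSp d,
      μ.map (fun p : Ω × Theta d C => (τ x p.1, Theta.shift x p.2)) = μ) :
    (∀ᵐ p ∂μ, ∀ q : EucSp d, IsRatVec q →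
      ∃ L : ℝ, Tendsto (fun t : ℝ => (p.2).1 (t • q) / t) atTop (𝓝 L)) ∧
    (∀ (x q : EucSp d), IsRatVec q →
      ∀ᵐ p ∂μ, ∃ L : ℝ,
        Tendsto (fun t : ℝ => ((p.2).1 (x + t • q) - (p.2).1 x) / t) atTop (𝓝 L) ∧
        Tendsto (fun t : ℝ => (p.2).1 (t • q) / t) atTop (𝓝 L)) := by
  classical
  have perq : ∀ q : EucSp d, ∀ᵐ p ∂μ, ∃ L : ℝ,
      Tendsto (fun t : ℝ => (p.2).1 (t • q) / t) atTop (𝓝 L) := by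
    intro q
    set T : Ω × Theta d C → Ω × Theta d C :=
      fun p => (τ q p.1, Theta.shift q p.2) with hTdef
    set F : Ω × Theta d C → ℝ := fun p => (p.2).1 q with hFdef
    have hTmeas : Measurable T :=
      ((hτmp q).measurable.comp measurable_fst).prodMk
        ((theta_continuous_shift q).measurable.comp measurable_snd)
    have hTmp : MeasurePreserving T μ μ := ⟨hTmeas, hinv q⟩
    have hFmeas : Measurable F := (theta_continuous_eval q).measurable.comp measurable_snd
    have hFbd : ∀ p, |F p| ≤ C * ‖q‖ := by
      intro p
      have h := p.2.2.2 q 0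
      rw [p.2.2.1, sub_zero, sub_zero] at h
      exact h
    have hiter : ∀ (n : ℕ) (p : Ω × Theta d C),
        T^[n] p = (τ ((n:ℝ) • q) p.1, Theta.shift ((n:ℝ) • q) p.2) := by
      intro n
      induction n with
      | zero =>
        intro p
        simp only [Function.iterate_zero, id_eq, Nat.cast_zero, zero_smul, hτzero,
          theta_shift_zero]
      | succ n ih =>
        intro p
        rw [Function.iterate_succ_apply', ih p]
        simp only [hTdef]
        rw [← hτgrp q ((n:ℝ) • q) p.1, theta_shift_shift]
        have h1 : q + (n:ℝ) • q = (((n+1:ℕ)):ℝ) • q := by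
          push_cast
          rw [add_smul, one_smul]
          abel
        have h2 : (n:ℝ) • q + q = (((n+1:ℕ)):ℝ) • q := by
          push_cast
          rw [add_smul, one_smul]
        rw [h1, h2]
    have hsum : ∀ (n : ℕ) (p : Ω × Theta d C),
        birkhoffSum T F n p = (p.2).1 ((n:ℝ) • q) := by
      intro n p
      induction n with
      | zero =>
        rw [birkhoffSum_zero, Nat.cast_zero, zero_smul, p.2.2.1]
      | succ n ih =>
        rw [birkhoffSum_succ, ih, hiter n p]
        have hv : F (τ ((n:ℝ) • q) p.1, Theta.shift ((n:ℝ) • q) p.2)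
            = (p.2).1 (q + (n:ℝ) • q) - (p.2).1 ((n:ℝ) • q) := rfl
        rw [hv]
        have hsm : q + (n:ℝ) • q = (((n+1:ℕ)):ℝ) • q := by
          push_cast
          rw [add_smul, one_smul]
          abel
        rw [hsm]
        ring
    have hbirk := birkhoff_bounded (μ := μ) hTmp hFmeas (C * ‖q‖) hFbd
      (mul_nonneg hC.le (norm_nonneg q))
    filter_upwards [hbirk] with p hp
    obtain ⟨L, hL⟩ := hp
    refine ⟨L, ?_⟩
    have hLn : Tendsto (fun n : ℕ => (p.2).1 ((n:ℝ) • q) / n) atTop (𝓝 L) := by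
      refine hL.congr fun n => ?_
      rw [hsum n p]
    refine tendsto_real_of_nat (K := C * ‖q‖) (mul_nonneg hC.le (norm_nonneg q))
      (fun t => (p.2).1 (t • q)) ?_ ?_ hLn
    · show (p.2).1 ((0:ℝ) • q) = 0
      rw [zero_smul, p.2.2.1]
    · intro s t
      have h := p.2.2.2 (s • q) (t • q)
      rw [← sub_smul, norm_smul, Real.norm_eq_abs] at h
      calc |(p.2).1 (s • q) - (p.2).1 (t • q)| ≤ C * (|s - t| * ‖q‖) := h
        _ = C * ‖q‖ * |s - t| := by ring
  constructor
  · have hQc : Set.Countable {q : EucSp d | IsRatVec q} := by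
      have hsub : {q : EucSp d | IsRatVec q} ⊆
          Set.range (fun a : Fin d → ℚ => (WithLp.toLp 2 (fun i => (a i : ℝ)) : EucSp d)) := by
        intro q hq
        refine ⟨fun i => (hq i).choose, ?_⟩
        ext i
        exact ((hq i).choose_spec).symm
      exact (Set.countable_range _).mono hsub
    have hb := (ae_ball_iff hQc).mpr fun q _ => perq q
    filter_upwards [hb] with p hp q hq
    exact hp q hq
  · intro x q _
    filter_upwards [perq q] with p hp
    obtain ⟨L, hL⟩ := hp
    refine ⟨L, ?_, hL⟩
    have hdiff : Tendsto (fun t : ℝ =>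
        (((p.2).1 (x + t • q) - (p.2).1 x) - (p.2).1 (t • q)) / t) atTop (𝓝 0) := by
      refine squeeze_zero_norm' (a := fun t : ℝ => 2 * (C * ‖x‖) / t) ?_
        (Tendsto.div_atTop tendsto_const_nhds tendsto_id)
      filter_upwards [eventually_ge_atTop (1:ℝ)] with t ht
      have ht0 : (0:ℝ) < t := by linarith
      have h1 : |(p.2).1 (x + t • q) - (p.2).1 (t • q)| ≤ C * ‖x‖ := by
        have := p.2.2.2 (x + t • q) (t • q)
        rwa [add_sub_cancel_right] at this
      have h2 : |(p.2).1 x| ≤ C * ‖x‖ := by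
        have := p.2.2.2 x 0
        rwa [p.2.2.1, sub_zero, sub_zero] at this
      rw [Real.norm_eq_abs, abs_div, abs_of_pos ht0]
      gcongr
      have hre : ((p.2).1 (x + t • q) - (p.2).1 x) - (p.2).1 (t • q)
          = ((p.2).1 (x + t • q) - (p.2).1 (t • q)) - (p.2).1 x := by ring
      rw [hre]
      calc |((p.2).1 (x + t • q) - (p.2).1 (t • q)) - (p.2).1 x|
          ≤ |(p.2).1 (x + t • q) - (p.2).1 (t • q)| + |(p.2).1 x| := abs_sub _ _
        _ ≤ 2 * (C * ‖x‖) := by linarith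
    have h2 := hL.add hdiff
    rw [add_zero] at h2
    refine h2.congr fun t => ?_
    rw [← add_div]
    congr 1
    ring

end
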